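/- (Lemma 4.3, monotonicity and low-power concavity.) Let P ≥ 0. Define g₃ᴵ : ℝ → ℝ by g₃ᴵ(C) = 1/2 + (1/2)·erf(√C + √(P/2)) and g₃ᴿ : ℝ → ℝ by g₃ᴿ(C) = 1/2 + (1/2)·erf(√C − √(P/2)). Then: (i) g₃ᴵ is monotonically increasing on [0, ∞) (MonotoneOn g₃ᴵ (Set.Ici 0)) and concave on [0, ∞) (ConcaveOn ℝ (Set.Ici 0) g₃ᴵ); (ii) g₃ᴿ is monotonically increasing on [0, ∞) (MonotoneOn g₃ᴿ (Set.Ici 0)); and (iii) if moreover P ≤ 4, then g₃ᴿ is concave on [0, ∞) (ConcaveOn ℝ (Set.Ici 0) g₃ᴿ). -/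

import Mathlib

open MeasureTheory ProbabilityTheory Real Set

noncomputable def erf (x : ℝ) : ℝ :=
  (2 / Real.sqrt Real.pi) * ∫ t in (0:ℝ)..x, Real.exp (-t^2)

lemma exp_neg_sq_cont : Continuous fun t : ℝ => Real.exp (-t^2) := by continuity

lemma erf_hasDerivAt (x : ℝ) :
    HasDerivAt erf ((2 / Real.sqrt Real.pi) * Real.exp (-x^2)) x := by
  have hI : HasDerivAt (fun u => ∫ t in (0:ℝ)..u, Real.exp (-t^2)) (Real.exp (-x^2)) x :=
    intervalIntegral.integral_hasDerivAt_right
      (exp_neg_sq_cont.intervalIntegrable _ _)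
      (exp_neg_sq_cont.stronglyMeasurableAtFilter volume _)
      exp_neg_sq_cont.continuousAt
  exact hI.const_mul _

lemma erf_monotone : Monotone erf := by
  intro x y hxy
  unfold erf
  apply mul_le_mul_of_nonneg_left _ (by positivity : (0:ℝ) ≤ 2 / Real.sqrt Real.pi)
  have h1 : IntervalIntegrable (fun t : ℝ => Real.exp (-t^2)) volume 0 x :=
    exp_neg_sq_cont.intervalIntegrable _ _
  have h2 : IntervalIntegrable (fun t : ℝ => Real.exp (-t^2)) volume x y :=
    exp_neg_sq_cont.intervalIntegrable _ _
  rw [← intervalIntegral.integral_add_adjacent_intervals h1 h2]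
  have : 0 ≤ ∫ t in x..y, Real.exp (-t^2) :=
    intervalIntegral.integral_nonneg hxy (fun t _ => (Real.exp_pos _).le)
  linarith

lemma erf_continuous : Continuous erf :=
  Differentiable.continuous (fun x => (erf_hasDerivAt x).differentiableAt)

lemma g_monotone (b : ℝ) :
    MonotoneOn (fun C => 1/2 + (1/2) * erf (Real.sqrt C + b)) (Set.Ici 0) := by
  intro x _ y _ hxy
  have := erf_monotone (add_le_add_left (Real.sqrt_le_sqrt hxy) b)
  dsimp only
  linarith

lemma g_hasDerivAt (b : ℝ) {C : ℝ} (hC : 0 < C) :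
    HasDerivAt (fun C => 1/2 + (1/2) * erf (Real.sqrt C + b))
      (Real.exp (-(Real.sqrt C + b)^2) / (2 * Real.sqrt Real.pi * Real.sqrt C)) C := by
  have hs : HasDerivAt (fun C => Real.sqrt C + b) (1 / (2 * Real.sqrt C)) C :=
    (Real.hasDerivAt_sqrt hC.ne').add_const b
  have he := (erf_hasDerivAt (Real.sqrt C + b)).comp C hs
  have h := (he.const_mul (1/2 : ℝ)).const_add (1/2 : ℝ)
  refine h.congr_deriv ?_
  have h1 : Real.sqrt Real.pi ≠ 0 := by positivity
  have h2 : Real.sqrt C ≠ 0 := by positivity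
  field_simp

lemma phi_antitone (b : ℝ) (hb : ∀ u : ℝ, 0 < u → 0 ≤ 2 * u * (u + b) + 1) :
    AntitoneOn (fun u : ℝ => Real.exp (-(u + b)^2) / u) (Set.Ioi 0) := by
  have key : ∀ u : ℝ, 0 < u → HasDerivAt (fun u : ℝ => Real.exp (-(u + b)^2) / u)
      (-(Real.exp (-(u + b)^2) * (2 * u * (u + b) + 1)) / u^2) u := by
    intro u hu
    have hnum : HasDerivAt (fun u : ℝ => Real.exp (-(u + b)^2))
        (Real.exp (-(u + b)^2) * (-(2 * (u + b)))) u := by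
      have hin : HasDerivAt (fun u : ℝ => -(u + b)^2) (-(2 * (u + b))) u := by
        have : HasDerivAt (fun u : ℝ => (u + b)^2) (2 * (u + b)) u := by
          simpa using ((hasDerivAt_id u).add_const b).fun_pow 2
        simpa using this.fun_neg
      simpa using hin.exp
    have := hnum.div (hasDerivAt_id' u) hu.ne'
    refine this.congr_deriv ?_
    field_simp
    ring
  apply antitoneOn_of_deriv_nonpos (convex_Ioi 0)
  · intro u hu
    exact (key u hu).continuousAt.continuousWithinAt
  · intro u hu
    rw [interior_Ioi] at hu
    exact (key u hu).differentiableAt.differentiableWithinAt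
  · intro u hu
    rw [interior_Ioi] at hu
    rw [(key u hu).deriv]
    apply div_nonpos_of_nonpos_of_nonneg
    · have h1 := hb u hu
      have h2 := (Real.exp_pos (-(u + b)^2)).le
      nlinarith
    · positivity

lemma g_concave (b : ℝ) (hb : ∀ u : ℝ, 0 < u → 0 ≤ 2 * u * (u + b) + 1) :
    ConcaveOn ℝ (Set.Ici 0) (fun C => 1/2 + (1/2) * erf (Real.sqrt C + b)) := by
  apply AntitoneOn.concaveOn_of_deriv (convex_Ici 0)
  · exact (continuous_const.add (continuous_const.mul
      (erf_continuous.comp (Real.continuous_sqrt.add continuous_const)))).continuousOn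
  · intro C hC
    rw [interior_Ici] at hC
    exact (g_hasDerivAt b hC).differentiableAt.differentiableWithinAt
  · rw [interior_Ici]
    intro x hx y hy hxy
    rw [(g_hasDerivAt b hx).deriv, (g_hasDerivAt b hy).deriv]
    have hsx : (0:ℝ) < Real.sqrt x := Real.sqrt_pos.mpr hx
    have hsy : (0:ℝ) < Real.sqrt y := Real.sqrt_pos.mpr hy
    have hphi := phi_antitone b hb hsx (Set.mem_Ioi.mpr hsy) (Real.sqrt_le_sqrt hxy)
    dsimp only at hphi
    have hpi : (0:ℝ) < Real.sqrt Real.pi := Real.sqrt_pos.mpr Real.pi_pos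
    rw [div_le_div_iff₀ (by positivity) (by positivity)]
    rw [div_le_div_iff₀ hsy hsx] at hphi
    nlinarith

theorem stmt_18 (P : ℝ) (hP : 0 ≤ P)
    (g₃I g₃R : ℝ → ℝ)
    (hg₃I : ∀ C, g₃I C = 1/2 + (1/2) * erf (Real.sqrt C + Real.sqrt (P/2)))
    (hg₃R : ∀ C, g₃R C = 1/2 + (1/2) * erf (Real.sqrt C - Real.sqrt (P/2))) :
    (MonotoneOn g₃I (Set.Ici 0) ∧ ConcaveOn ℝ (Set.Ici 0) g₃I) ∧
    MonotoneOn g₃R (Set.Ici 0) ∧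
    (P ≤ 4 → ConcaveOn ℝ (Set.Ici 0) g₃R) := by
  have hI : g₃I = fun C => 1/2 + (1/2) * erf (Real.sqrt C + Real.sqrt (P/2)) :=
    funext hg₃I
  have hR : g₃R = fun C => 1/2 + (1/2) * erf (Real.sqrt C + (-Real.sqrt (P/2))) := by
    funext C
    rw [hg₃R C, sub_eq_add_neg]
  have ha : (0:ℝ) ≤ Real.sqrt (P/2) := Real.sqrt_nonneg _
  refine ⟨⟨?_, ?_⟩, ?_, ?_⟩
  · rw [hI]; exact g_monotone _
  · rw [hI]
    exact g_concave _ (fun u hu => by nlinarith)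
  · rw [hR]; exact g_monotone _
  · intro hP4
    rw [hR]
    apply g_concave
    intro u hu
    have h2 : (Real.sqrt (P/2))^2 ≤ 2 := by
      rw [Real.sq_sqrt (by linarith)]; linarith
    nlinarith [sq_nonneg (2*u - Real.sqrt (P/2))]
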